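/- arXiv:2511.04878 — 3 statements merged into one kernel-verified Lean document; each statement's English description precedes it below -/
import Mathlib

section
/- Let a, b > 0, c > 0, α > 0 be real numbers with σ := c - a - b + α > 0, and let k ≥ 0 be real. Then ∫₀¹ t^{c-1}(1-t)^{α+k-1} ₂F₁(a,b;c;t) dt = Γ(c) Γ(α+k) Γ(σ+k) / (Γ(σ+a+k) Γ(σ+b+k)). (This is the monomial case f(z) = z^k of the integral transform lemma; the integral converges since the integrand is O((1-t)^{σ+k-1}) near t = 1.) -/
open MeasureTheory ENNReal NNReal

/-- Pochhammer symbol `(a)_k = Γ(a+k)/Γ(a)`. -/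
noncomputable def poch (a : ℝ) (k : ℕ) : ℝ := Real.Gamma (a + k) / Real.Gamma a

/-- Gauss hypergeometric function `₂F₁(a,b;c;t)`, as a sum of its series. -/
noncomputable def hyp2F1 (a b c t : ℝ) : ℝ :=
  ∑' k : ℕ, (poch a k * poch b k) / (poch c k * (Nat.factorial k)) * t ^ k

/-- `S_pq(t)`. -/
noncomputable def Spq (n p q : ℕ) (t : ℝ) : ℝ :=
  (Real.Gamma (n + p) * Real.Gamma (n + q)) / (Real.Gamma n * Real.Gamma ((n : ℝ) + p + q)) *
    hyp2F1 p q ((p : ℝ) + q + n) t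

/-- `c_pq(s)`. -/
noncomputable def cpq (n p q : ℕ) (s : ℝ) : ℝ :=
  poch (s + 1) n / Real.Gamma n *
    ∫ t in Set.Ioo (0:ℝ) 1, t ^ ((p : ℝ) + q + n - 1) * (1 - t) ^ s * (Spq n p q t) ^ 2

namespace HypAux
open Filter Topology MeasureTheory


noncomputable def T (a b c : ℝ) (n : ℕ) : ℝ :=
  poch a n * poch b n / (poch c n * (Nat.factorial n))

lemma poch_zero (a : ℝ) (ha : 0 < a) : poch a 0 = 1 := by
  simp [poch, div_self (Real.Gamma_pos_of_pos ha).ne']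

lemma poch_pos {a : ℝ} (ha : 0 < a) (n : ℕ) : 0 < poch a n :=
  div_pos (Real.Gamma_pos_of_pos (by positivity)) (Real.Gamma_pos_of_pos ha)

lemma poch_succ {a : ℝ} (ha : 0 < a) (n : ℕ) :
    poch a (n + 1) = poch a n * (a + n) := by
  have h : a + (n + 1 : ℕ) = (a + n) + 1 := by push_cast; ring
  rw [poch, h, Real.Gamma_add_one (by positivity), poch]
  ring

lemma Gamma_add_nat {a : ℝ} (ha : 0 < a) (n : ℕ) :
    Real.Gamma (a + n) = Real.Gamma a * poch a n := by
  rw [poch, mul_div_cancel₀ _ (Real.Gamma_pos_of_pos ha).ne']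

lemma poch_prod {a : ℝ} (ha : 0 < a) (n : ℕ) :
    poch a (n + 1) = ∏ j ∈ Finset.range (n + 1), (a + j) := by
  induction n with
  | zero => simp [poch_succ ha, poch_zero a ha]
  | succ m ih => rw [poch_succ ha, ih, Finset.prod_range_succ (fun j => (a + (j:ℝ))) (m+1)]

lemma poch_one (n : ℕ) : poch 1 n = Nat.factorial n := by
  induction n with
  | zero => simp [poch_zero 1 one_pos]
  | succ m ih => rw [poch_succ one_pos, ih, Nat.factorial_succ]; push_cast; ring

lemma T_zero {a b c : ℝ} (ha : 0 < a) (hb : 0 < b) (hc : 0 < c) : T a b c 0 = 1 := by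
  simp [T, poch_zero a ha, poch_zero b hb, poch_zero c hc]

lemma T_pos {a b c : ℝ} (ha : 0 < a) (hb : 0 < b) (hc : 0 < c) (n : ℕ) : 0 < T a b c n := by
  have := poch_pos ha n; have := poch_pos hb n; have := poch_pos hc n
  have : (0:ℝ) < Nat.factorial n := by positivity
  unfold T; positivity

lemma T_succ {a b c : ℝ} (ha : 0 < a) (hb : 0 < b) (hc : 0 < c) (n : ℕ) :
    T a b c (n + 1) = T a b c n * ((a + n) * (b + n) / ((c + n) * (n + 1))) := by
  have h1 := poch_pos ha n; have h2 := poch_pos hb n; have h3 := poch_pos hc n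
  have h4 : (0:ℝ) < Nat.factorial n := by positivity
  rw [T, T, poch_succ ha, poch_succ hb, poch_succ hc, Nat.factorial_succ]
  push_cast
  field_simp

/-- `poch (c+1) n = poch c n * (c+n)/c`. -/
lemma poch_shift {c : ℝ} (hc : 0 < c) (n : ℕ) :
    poch (c + 1) n * c = poch c n * (c + n) := by
  have h : c + 1 + (n:ℝ) = (c + n) + 1 := by ring
  rw [poch, poch, h, Real.Gamma_add_one (by positivity), Real.Gamma_add_one hc.ne']
  field_simp [(Real.Gamma_pos_of_pos hc).ne']

lemma GammaSeq_eq {x : ℝ} (hx : 0 < x) (n : ℕ) :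
    Real.GammaSeq x n = (n:ℝ) ^ x * (Nat.factorial n) / poch x (n + 1) := by
  rw [Real.GammaSeq, poch_prod hx]

lemma GammaSeq_pos {x : ℝ} (hx : 0 < x) {n : ℕ} (hn : 1 ≤ n) : 0 < Real.GammaSeq x n := by
  rw [GammaSeq_eq hx]
  have h1 : (0:ℝ) < (n:ℝ) := by exact_mod_cast hn.trans_lt' Nat.zero_lt_one
  have h2 := poch_pos hx (n+1)
  have h3 : (0:ℝ) < Nat.factorial n := by positivity
  positivity

lemma poch_eq_GammaSeq {x : ℝ} (hx : 0 < x) {n : ℕ} (hn : 1 ≤ n) :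
    poch x (n + 1) = (n:ℝ) ^ x * (Nat.factorial n) / Real.GammaSeq x n := by
  have h1 : (0:ℝ) < (n:ℝ) := by exact_mod_cast hn.trans_lt' Nat.zero_lt_one
  have h3 : (0:ℝ) < Nat.factorial n := by positivity
  have hA : (n:ℝ) ^ x * (Nat.factorial n : ℝ) ≠ 0 := by positivity
  rw [GammaSeq_eq hx]
  rw [_root_.eq_div_iff (by simpa using div_ne_zero hA (poch_pos hx (n+1)).ne')]
  rw [mul_div_assoc', mul_comm, mul_div_assoc, div_self (poch_pos hx (n+1)).ne', mul_one]


lemma poch_ratio_tendsto {w x y z : ℝ} (hw : 0 < w) (hx : 0 < x) (hy : 0 < y) (hz : 0 < z) :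
    Tendsto (fun n : ℕ => poch w n * poch x n / (poch y n * poch z n) * (n:ℝ) ^ (y + z - w - x))
      atTop (𝓝 (Real.Gamma y * Real.Gamma z / (Real.Gamma w * Real.Gamma x))) := by
  set e := y + z - w - x with he
  have hΓw := Real.Gamma_pos_of_pos hw
  have hΓx := Real.Gamma_pos_of_pos hx
  have hΓy := Real.Gamma_pos_of_pos hy
  have hΓz := Real.Gamma_pos_of_pos hz
  have hg : Tendsto (fun m : ℕ =>
      Real.GammaSeq y m * Real.GammaSeq z m / (Real.GammaSeq w m * Real.GammaSeq x m)
        * ((1 + 1/(m:ℝ)) ^ e)) atTop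
      (𝓝 (Real.Gamma y * Real.Gamma z / (Real.Gamma w * Real.Gamma x) * 1 ^ e)) := by
    refine Tendsto.mul ?_ ?_
    · exact Tendsto.div ((Real.GammaSeq_tendsto_Gamma y).mul (Real.GammaSeq_tendsto_Gamma z))
        ((Real.GammaSeq_tendsto_Gamma w).mul (Real.GammaSeq_tendsto_Gamma x))
        (by positivity)
    · exact (Tendsto.rpow_const (by simpa using (tendsto_one_div_atTop_nhds_zero_nat (𝕜 := ℝ)).const_add 1)
        (Or.inl one_ne_zero))
  rw [Real.one_rpow, mul_one] at hg
  rw [← tendsto_add_atTop_iff_nat 1]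
  refine hg.congr' ?_
  filter_upwards [eventually_ge_atTop 1] with m hm
  have hm0 : (0:ℝ) < (m:ℝ) := by exact_mod_cast hm.trans_lt' Nat.zero_lt_one
  have hF : (0:ℝ) < (Nat.factorial m : ℝ) := by positivity
  have hGw := GammaSeq_pos hw hm
  have hGx := GammaSeq_pos hx hm
  have hGy := GammaSeq_pos hy hm
  have hGz := GammaSeq_pos hz hm
  have hcast : ((m + 1 : ℕ) : ℝ) = (1 + 1/(m:ℝ)) * m := by push_cast; field_simp
  have key : (m:ℝ) ^ y * (m:ℝ) ^ z = (m:ℝ) ^ w * (m:ℝ) ^ x * (m:ℝ) ^ e := by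
    rw [← Real.rpow_add hm0, ← Real.rpow_add hm0, ← Real.rpow_add hm0, he]; ring_nf
  have key2 : ((m + 1 : ℕ) : ℝ) ^ e = (1 + 1/(m:ℝ)) ^ e * (m:ℝ) ^ e := by
    rw [hcast, Real.mul_rpow (by positivity) hm0.le]
  show _ = _
  have hone : (1 + 1/(m:ℝ)) = ((m:ℝ)+1)/(m:ℝ) := by field_simp
  rw [hone] at key2 ⊢
  rw [poch_eq_GammaSeq hw hm, poch_eq_GammaSeq hx hm, poch_eq_GammaSeq hy hm,
    poch_eq_GammaSeq hz hm, key2]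
  field_simp
  linear_combination key

lemma tendsto_addconst_div (u v : ℝ) :
    Tendsto (fun n : ℕ => (u + n) / (v + n)) atTop (𝓝 1) := by
  have hg : Tendsto (fun n : ℕ => v + (n:ℝ)) atTop atTop :=
    tendsto_atTop_add_const_left _ v tendsto_natCast_atTop_atTop
  have h0 : Tendsto (fun n : ℕ => (u - v) / (v + (n:ℝ))) atTop (𝓝 0) :=
    Tendsto.div_atTop tendsto_const_nhds hg
  have := h0.const_add 1
  rw [add_zero] at this
  refine this.congr' ?_
  filter_upwards [hg.eventually_gt_atTop 0] with n hn
  field_simp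
  ring

lemma T_asymp {a b c : ℝ} (ha : 0 < a) (hb : 0 < b) (hc : 0 < c) :
    Tendsto (fun n : ℕ => T a b c n * (n:ℝ) ^ (c + 1 - a - b)) atTop
      (𝓝 (Real.Gamma c / (Real.Gamma a * Real.Gamma b))) := by
  have h := poch_ratio_tendsto ha hb hc one_pos
  rw [Real.Gamma_one, mul_one] at h
  refine h.congr (fun n => ?_)
  simp only [T, poch_one]

lemma summable_T {a b c : ℝ} (ha : 0 < a) (hb : 0 < b) (hab : a + b < c) :
    Summable (T a b c) := by
  have hc : 0 < c := lt_trans (by positivity) hab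
  set p := c + 1 - a - b with hp
  have hp1 : 1 < p := by simp [hp]; linarith
  set K := Real.Gamma c / (Real.Gamma a * Real.Gamma b) with hK
  have hbd : ∀ᶠ n : ℕ in atTop, T a b c n * (n:ℝ) ^ p ≤ K + 1 :=
    (T_asymp ha hb hc).eventually_le_const (lt_add_one K)
  obtain ⟨N, hN⟩ := hbd.exists_forall_of_atTop
  rw [← _root_.summable_nat_add_iff (N + 1)]
  have hsum0 : Summable (fun n : ℕ => (K + 1) * (((n:ℕ):ℝ) ^ p)⁻¹) :=
    (Real.summable_nat_rpow_inv.2 hp1).mul_left _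
  have hsum := (_root_.summable_nat_add_iff (N+1)).mpr hsum0
  refine Summable.of_nonneg_of_le (fun n => (T_pos ha hb hc _).le) (fun n => ?_) hsum
  have hn1 : (0:ℝ) < ((n + (N+1) : ℕ):ℝ) := by positivity
  have h2 := hN (n + (N+1)) (by omega)
  have hppos : (0:ℝ) < ((n + (N+1) : ℕ):ℝ) ^ p := Real.rpow_pos_of_pos hn1 p
  rw [← div_eq_mul_inv, le_div_iff₀ hppos]
  exact h2

lemma tendsto_mul_T {a b c : ℝ} (ha : 0 < a) (hb : 0 < b) (hab : a + b < c) :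
    Tendsto (fun n : ℕ => (n:ℝ) * T a b c n) atTop (𝓝 0) := by
  have hc : 0 < c := lt_trans (by positivity) hab
  set p := c + 1 - a - b with hp
  have hp1 : 1 < p := by simp [hp]; linarith
  have h1 := T_asymp ha hb hc
  have h2 : Tendsto (fun n : ℕ => ((n:ℝ)) ^ (-(p-1))) atTop (𝓝 0) :=
    (tendsto_rpow_neg_atTop (by linarith)).comp tendsto_natCast_atTop_atTop
  have h3 := h1.mul h2
  rw [mul_zero] at h3
  refine h3.congr' ?_
  filter_upwards [eventually_ge_atTop 1] with n hn
  have hn0 : (0:ℝ) < (n:ℝ) := by exact_mod_cast hn.trans_lt' Nat.zero_lt_one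
  rw [mul_assoc, ← Real.rpow_add hn0]
  rw [show c + 1 - a - b + -(p - 1) = 1 by rw [hp]; ring, Real.rpow_one]
  ring

lemma summable_T_mul_pow {a b c x : ℝ} (ha : 0 < a) (hb : 0 < b) (hc : 0 < c)
    (hx0 : 0 < x) (hx1 : x < 1) :
    Summable (fun n : ℕ => T a b c n * x ^ n) := by
  refine summable_of_ratio_test_tendsto_lt_one hx1 ?_ ?_
  · filter_upwards with n
    exact (mul_pos (T_pos ha hb hc n) (pow_pos hx0 n)).ne'
  · have h1 : Tendsto (fun n : ℕ => (a + n) / (1 + n) * ((b + n) / (c + n)) * x) atTop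
        (𝓝 (1 * 1 * x)) :=
      (Tendsto.mul (tendsto_addconst_div a 1) (tendsto_addconst_div b c)).mul_const x
    rw [one_mul, one_mul] at h1
    refine h1.congr' ?_
    filter_upwards with n
    have hT := T_pos ha hb hc n
    have hxp := pow_pos hx0 n
    have h3 : (0:ℝ) < c + n := by positivity
    have h4 : (0:ℝ) < 1 + (n:ℝ) := by positivity
    rw [T_succ ha hb hc n, pow_succ]
    simp only [norm_mul, Real.norm_eq_abs]
    rw [abs_of_pos hT, abs_of_pos hxp, abs_of_pos hx0,
      abs_of_pos (show (0:ℝ) < (a+(n:ℝ))*(b+(n:ℝ))/((c+(n:ℝ))*((n:ℝ)+1)) by positivity)]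
    field_simp
    ring

lemma T_shift {a b c : ℝ} (ha : 0 < a) (hb : 0 < b) (hc : 0 < c) (n : ℕ) :
    T a b (c+1) n * (c + n) = T a b c n * c := by
  have h1 := poch_pos hc n
  have h2 := poch_pos (show (0:ℝ) < c + 1 by linarith) n
  have h3 : (0:ℝ) < Nat.factorial n := by positivity
  have h4 := poch_shift hc n
  rw [T, T]
  rw [div_mul_eq_mul_div, div_mul_eq_mul_div, div_eq_div_iff (by positivity) (by positivity)]
  linear_combination (-(poch a n * poch b n * (Nat.factorial n : ℝ))) * h4

lemma gauss_step {a b c : ℝ} (ha : 0 < a) (hb : 0 < b) (hab : a + b < c) :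
    (∑' n, T a b c n) = (c - a) * (c - b) / (c * (c - a - b)) * ∑' n, T a b (c+1) n := by
  have hc : 0 < c := lt_trans (by positivity) hab
  have hc1 : 0 < c + 1 := by linarith
  have hid : ∀ n : ℕ, c*(c-a-b) * T a b c n - (c-a)*(c-b) * T a b (c+1) n
      = c*n*T a b c n - c*(n+1)*T a b c (n+1) := by
    intro n
    have h1 := T_shift ha hb hc n
    have h2 := T_succ ha hb hc n
    have hcn : (0:ℝ) < c + n := by positivity
    have hn1 : (0:ℝ) < (n:ℝ) + 1 := by positivity
    rw [h2]
    have h1' : T a b (c+1) n = T a b c n * c / (c + n) := by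
      field_simp at h1 ⊢
      linarith [h1]
    rw [h1']
    field_simp
    ring
  -- partial sums telescope
  have hsum : Summable (T a b c) := summable_T ha hb hab
  have hsum' : Summable (T a b (c+1)) := summable_T ha hb (by linarith)
  have hps : Tendsto (fun N => ∑ n ∈ Finset.range N,
      (c*(c-a-b) * T a b c n - (c-a)*(c-b) * T a b (c+1) n)) atTop
      (𝓝 (c*(c-a-b) * (∑' n, T a b c n) - (c-a)*(c-b) * (∑' n, T a b (c+1) n))) := by
    have t1 := (hsum.hasSum.tendsto_sum_nat).const_mul (c*(c-a-b))
    have t2 := (hsum'.hasSum.tendsto_sum_nat).const_mul ((c-a)*(c-b))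
    have := t1.sub t2
    refine this.congr (fun N => ?_)
    rw [Finset.sum_sub_distrib, ← Finset.mul_sum, ← Finset.mul_sum]
  have hps2 : Tendsto (fun N : ℕ => ∑ n ∈ Finset.range N,
      (c*(c-a-b) * T a b c n - (c-a)*(c-b) * T a b (c+1) n)) atTop (𝓝 0) := by
    have h0 : ∀ N : ℕ, (∑ n ∈ Finset.range N,
        (c*(c-a-b) * T a b c n - (c-a)*(c-b) * T a b (c+1) n))
        = - (c * N * T a b c N) := by
      intro N
      have h5 : ∀ n ∈ Finset.range N, c * (c-a-b) * T a b c n - (c-a)*(c-b) * T a b (c+1) n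
          = (fun i : ℕ => c*(i:ℝ)*T a b c i) n - (fun i : ℕ => c*(i:ℝ)*T a b c i) (n+1) := by
        intro n _
        rw [hid n]
        push_cast
        ring
      rw [Finset.sum_congr rfl h5, Finset.sum_range_sub' (fun i : ℕ => c*(i:ℝ)*T a b c i) N]
      push_cast
      ring
    simp only [h0]
    have := (tendsto_mul_T ha hb hab).const_mul (-c)
    rw [mul_zero] at this
    refine this.congr (fun N => ?_)
    ring
  have heq := tendsto_nhds_unique hps hps2
  have hcab : c * (c - a - b) ≠ 0 := by
    have : 0 < c - a - b := by linarith
    positivity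
  rw [div_mul_eq_mul_div, eq_div_iff hcab]
  linear_combination heq

lemma gauss_iter {a b c : ℝ} (ha : 0 < a) (hb : 0 < b) (hab : a + b < c) (m : ℕ) :
    (∑' n, T a b c n)
      = poch (c-a) m * poch (c-b) m / (poch c m * poch (c-a-b) m) * ∑' n, T a b (c+m) n := by
  have hc : 0 < c := lt_trans (by positivity) hab
  have hca : 0 < c - a := by linarith
  have hcb : 0 < c - b := by linarith
  have hcab : 0 < c - a - b := by linarith
  induction m with
  | zero =>
    rw [poch_zero _ hca, poch_zero _ hcb, poch_zero _ hc, poch_zero _ hcab]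
    norm_num
  | succ m ih =>
    have habm : a + b < c + m := by
      have : (0:ℝ) ≤ m := Nat.cast_nonneg m
      linarith
    have hstep := gauss_step ha hb habm
    have hcast : c + (m:ℝ) + 1 = c + ((m+1 : ℕ):ℝ) := by push_cast; ring
    rw [hcast] at hstep
    rw [ih, hstep, poch_succ hca, poch_succ hcb, poch_succ hc, poch_succ hcab]
    have p1 := poch_pos hca m
    have p2 := poch_pos hcb m
    have p3 := poch_pos hc m
    have p4 := poch_pos hcab m
    have q1 : (0:ℝ) < c + m := by positivity
    have q2 : (0:ℝ) < c + m - a - b := by linarith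
    have e1 : c - a + m = c + m - a := by ring
    have e2 : c - b + m = c + m - b := by ring
    have e3 : c - a - b + m = c + m - a - b := by ring
    rw [e1, e2, e3]
    have q3 : (0:ℝ) < c + m - a := by linarith
    have q4 : (0:ℝ) < c + m - b := by linarith
    field_simp

lemma T_mono_c {a b c c' : ℝ} (ha : 0 < a) (hb : 0 < b) (hc : 0 < c) (hcc : c ≤ c') (n : ℕ) :
    T a b c' (n+1) * c' ≤ T a b c (n+1) * c := by
  have hc' : 0 < c' := lt_of_lt_of_le hc hcc
  -- poch inequality
  have hpoch : ∀ k : ℕ, poch c (k+1) * c' ≤ poch c' (k+1) * c := by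
    intro k
    induction k with
    | zero =>
      rw [poch_succ hc, poch_succ hc', poch_zero _ hc, poch_zero _ hc']
      push_cast
      nlinarith
    | succ j ih =>
      rw [poch_succ hc, poch_succ hc']
      have g1 : (0:ℝ) < c + (j+1 : ℕ) := by positivity
      have g2 : c + (j+1 : ℕ) ≤ c' + (j+1 : ℕ) := by linarith
      have g3 := poch_pos hc (j+1)
      have g4 := poch_pos hc' (j+1)
      calc poch c (j+1) * (c + (j+1:ℕ)) * c' = (poch c (j+1) * c') * (c + (j+1:ℕ)) := by ring
        _ ≤ (poch c' (j+1) * c) * (c + (j+1:ℕ)) := by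
            exact mul_le_mul_of_nonneg_right ih g1.le
        _ ≤ (poch c' (j+1) * c) * (c' + (j+1:ℕ)) := by
            refine mul_le_mul_of_nonneg_left g2 (by positivity)
        _ = poch c' (j+1) * (c' + (j+1:ℕ)) * c := by ring
  have h := hpoch n
  have p1 := poch_pos ha (n+1)
  have p2 := poch_pos hb (n+1)
  have p3 := poch_pos hc (n+1)
  have p4 := poch_pos hc' (n+1)
  have hF : (0:ℝ) < Nat.factorial (n+1) := by positivity
  rw [T, T, div_mul_eq_mul_div, div_mul_eq_mul_div, div_le_div_iff₀ (by positivity) (by positivity)]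
  calc poch a (n+1) * poch b (n+1) * c' * (poch c (n+1) * (Nat.factorial (n+1) : ℝ))
      = (poch a (n+1) * poch b (n+1) * (Nat.factorial (n+1):ℝ)) * (poch c (n+1) * c') := by ring
    _ ≤ (poch a (n+1) * poch b (n+1) * (Nat.factorial (n+1):ℝ)) * (poch c' (n+1) * c) := by
        refine mul_le_mul_of_nonneg_left h (by positivity)
    _ = poch a (n+1) * poch b (n+1) * c * (poch c' (n+1) * (Nat.factorial (n+1):ℝ)) := by ring

lemma gauss {a b c : ℝ} (ha : 0 < a) (hb : 0 < b) (hab : a + b < c) :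
    ∑' n, T a b c n
      = Real.Gamma c * Real.Gamma (c-a-b) / (Real.Gamma (c-a) * Real.Gamma (c-b)) := by
  have hc : 0 < c := lt_trans (by positivity) hab
  have hca : 0 < c - a := by linarith
  have hcb : 0 < c - b := by linarith
  have hcab : 0 < c - a - b := by linarith
  -- limit of the coefficient
  have hR : Tendsto (fun m : ℕ => poch (c-a) m * poch (c-b) m / (poch c m * poch (c-a-b) m))
      atTop (𝓝 (Real.Gamma c * Real.Gamma (c-a-b) / (Real.Gamma (c-a) * Real.Gamma (c-b)))) := by
    have h := poch_ratio_tendsto hca hcb hc hcab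
    refine h.congr (fun m => ?_)
    rw [show c + (c-a-b) - (c-a) - (c-b) = 0 by ring, Real.rpow_zero, mul_one]
  -- limit of the tail factor
  have hM : Summable (fun n : ℕ => T a b c (n+1)) := by
    rw [_root_.summable_nat_add_iff 1]
    exact summable_T ha hb hab
  set M := ∑' n : ℕ, T a b c (n+1) with hMdef
  have hM0 : 0 ≤ M := tsum_nonneg (fun n => (T_pos ha hb hc _).le)
  have hF : Tendsto (fun m : ℕ => ∑' n, T a b (c+m) n) atTop (𝓝 1) := by
    have hsm : ∀ m : ℕ, Summable (fun n : ℕ => T a b (c+m) (n+1)) := by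
      intro m
      rw [_root_.summable_nat_add_iff 1]
      refine summable_T ha hb ?_
      have : (0:ℝ) ≤ m := Nat.cast_nonneg m
      linarith
    have hcm : ∀ m : ℕ, (0:ℝ) < c + m := fun m => by positivity
    have hsplit : ∀ m : ℕ, (∑' n, T a b (c+m) n) = 1 + ∑' n, T a b (c+m) (n+1) := by
      intro m
      rw [Summable.tsum_eq_zero_add (by rw [← _root_.summable_nat_add_iff 1]; exact hsm m)]
      rw [T_zero ha hb (hcm m)]
    have hr : Tendsto (fun m : ℕ => ∑' n, T a b (c+m) (n+1)) atTop (𝓝 0) := by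
      have hub : ∀ m : ℕ, (∑' n, T a b (c+m) (n+1)) ≤ c / (c+m) * M := by
        intro m
        have hle : ∀ n : ℕ, T a b (c+m) (n+1) ≤ c/(c+m) * T a b c (n+1) := by
          intro n
          have := T_mono_c ha hb hc (by linarith [Nat.cast_nonneg (α := ℝ) m] : c ≤ c + (m:ℝ)) n
          rw [div_mul_eq_mul_div, le_div_iff₀ (hcm m)]
          linarith [this]
        calc (∑' n, T a b (c+m) (n+1)) ≤ ∑' n : ℕ, c/(c+(m:ℝ)) * T a b c (n+1) :=
              Summable.tsum_le_tsum hle (hsm m) (hM.mul_left (c/(c+(m:ℝ))))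
          _ = c/(c+m) * M := by rw [_root_.tsum_mul_left]
      have hlb : ∀ m : ℕ, 0 ≤ ∑' n, T a b (c+m) (n+1) :=
        fun m => tsum_nonneg (fun n => (T_pos ha hb (hcm m) _).le)
      have hg : Tendsto (fun m : ℕ => c/(c+m) * M) atTop (𝓝 0) := by
        have h1 : Tendsto (fun m : ℕ => c/(c+(m:ℝ))) atTop (𝓝 0) :=
          Tendsto.div_atTop tendsto_const_nhds
            (tendsto_atTop_add_const_left _ c tendsto_natCast_atTop_atTop)
        simpa using h1.mul_const M
      exact squeeze_zero hlb hub hg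
    have := hr.const_add (1:ℝ)
    rw [add_zero] at this
    exact this.congr (fun m => (hsplit m).symm)
  have hcomb := hR.mul hF
  rw [mul_one] at hcomb
  exact tendsto_nhds_unique
    (tendsto_const_nhds.congr (fun m => gauss_iter ha hb hab m)) hcomb

lemma complex_eq {u v t : ℝ} (ht0 : 0 ≤ t) (ht1 : t ≤ 1) :
    (t:ℂ) ^ ((u:ℂ)-1) * (1-(t:ℂ)) ^ ((v:ℂ)-1) = ((t ^ (u-1) * (1-t) ^ (v-1) : ℝ) : ℂ) := by
  rw [Complex.ofReal_mul, Complex.ofReal_cpow ht0, Complex.ofReal_cpow (by linarith)]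
  push_cast
  ring_nf

lemma betaIntegrable {u v : ℝ} (hu : 0 < u) (hv : 0 < v) :
    IntegrableOn (fun t : ℝ => t ^ (u-1) * (1-t) ^ (v-1)) (Set.Ioo 0 1) := by
  have hC := Complex.betaIntegral_convergent (u := (u:ℂ)) (v := (v:ℂ))
    (by simpa using hu) (by simpa using hv)
  have h1 : IntegrableOn (fun x : ℝ => (x:ℂ) ^ ((u:ℂ)-1) * (1-(x:ℂ)) ^ ((v:ℂ)-1))
      (Set.Ioc 0 1) := hC.1
  have h2 : IntegrableOn (fun x : ℝ => ((x:ℂ) ^ ((u:ℂ)-1) * (1-(x:ℂ)) ^ ((v:ℂ)-1)).re)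
      (Set.Ioc 0 1) := h1.re
  refine (h2.mono_set Set.Ioo_subset_Ioc_self).congr_fun ?_ measurableSet_Ioo
  intro t ht
  show ((t:ℂ) ^ ((u:ℂ)-1) * (1-(t:ℂ)) ^ ((v:ℂ)-1)).re = _
  rw [complex_eq ht.1.le ht.2.le, Complex.ofReal_re]

lemma betaIntegral_real {u v : ℝ} (hu : 0 < u) (hv : 0 < v) :
    ∫ t in Set.Ioo (0:ℝ) 1, t ^ (u-1) * (1-t) ^ (v-1)
      = Real.Gamma u * Real.Gamma v / Real.Gamma (u+v) := by
  have h := Complex.Gamma_mul_Gamma_eq_betaIntegral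
    (s := (u:ℂ)) (t := (v:ℂ)) (by simpa using hu) (by simpa using hv)
  have hbeta : Complex.betaIntegral u v
      = ((∫ t in (0:ℝ)..1, t ^ (u-1) * (1-t) ^ (v-1) : ℝ) : ℂ) := by
    rw [Complex.betaIntegral, ← intervalIntegral.integral_ofReal]
    refine intervalIntegral.integral_congr ?_
    intro t ht
    rw [Set.uIcc_of_le (zero_le_one)] at ht
    exact complex_eq ht.1 ht.2
  rw [hbeta, show ((u:ℂ)+(v:ℂ)) = ((u+v:ℝ):ℂ) by push_cast; ring, Complex.Gamma_ofReal,
    Complex.Gamma_ofReal, Complex.Gamma_ofReal, ← Complex.ofReal_mul, ← Complex.ofReal_mul]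
    at h
  have h' := Complex.ofReal_injective h
  have hG : Real.Gamma (u+v) ≠ 0 := (Real.Gamma_pos_of_pos (by linarith)).ne'
  rw [intervalIntegral.integral_of_le zero_le_one, integral_Ioc_eq_integral_Ioo] at h'
  rw [_root_.eq_div_iff hG, mul_comm (∫ t in Set.Ioo (0:ℝ) 1, t ^ (u-1) * (1-t) ^ (v-1))]
  exact h'.symm

end HypAux

open HypAux in
lemma HypAux.hyp2F1_eq (a b c t : ℝ) : hyp2F1 a b c t = ∑' n : ℕ, T a b c n * t ^ n := rfl

open HypAux Filter Topology in
/-- The monomial case of Lemma 3.3: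
`∫₀¹ t^{c-1}(1-t)^{α+k-1} ₂F₁(a,b;c;t) dt = Γ(c)Γ(α+k)Γ(σ+k)/(Γ(σ+a+k)Γ(σ+b+k))`,
where `σ = c - a - b + α`. -/
theorem statement2 (a b c α k : ℝ) (ha : 0 < a) (hb : 0 < b) (hc : 0 < c) (hα : 0 < α)
    (hσ : 0 < c - a - b + α) (hk : 0 ≤ k) :
    ∫ t in Set.Ioo (0:ℝ) 1, t ^ (c - 1) * (1 - t) ^ (α + k - 1) * hyp2F1 a b c t =
      Real.Gamma c * Real.Gamma (α + k) * Real.Gamma ((c - a - b + α) + k) /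
        (Real.Gamma ((c - a - b + α) + a + k) * Real.Gamma ((c - a - b + α) + b + k)) := by
  classical
  set s : ℝ := α + k with hs_def
  have hs : 0 < s := by rw [hs_def]; linarith
  set d : ℝ := c + s with hd_def
  have habd : a + b < d := by rw [hd_def, hs_def]; linarith
  have hd : 0 < d := by linarith
  set f : ℕ → ℝ → ℝ := fun n t => T a b c n * (t ^ ((c+(n:ℝ))-1) * (1-t) ^ (s-1)) with hf_def
  have hTpos : ∀ n, 0 < T a b c n := T_pos ha hb hc
  have hfmeas : ∀ n, Measurable (fun t => ENNReal.ofReal (f n t)) := by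
    intro n
    apply Measurable.ennreal_ofReal
    rw [hf_def]
    fun_prop
  have hfnonneg : ∀ (n : ℕ), ∀ t ∈ Set.Ioo (0:ℝ) 1, 0 ≤ f n t := by
    intro n t ht
    have h1 : (0:ℝ) ≤ t := ht.1.le
    have h2 : (0:ℝ) ≤ 1 - t := by linarith [ht.2]
    have v1 := Real.rpow_nonneg h1 ((c+(n:ℝ))-1)
    have v2 := Real.rpow_nonneg h2 (s-1)
    rw [hf_def]
    exact mul_nonneg (hTpos n).le (mul_nonneg v1 v2)
  have hIntOn : ∀ n : ℕ, IntegrableOn (f n) (Set.Ioo (0:ℝ) 1) := by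
    intro n
    have := (betaIntegrable (u := c + (n:ℝ)) (by positivity) hs).const_mul (T a b c n)
    exact this
  have hIval : ∀ n : ℕ, ∫ t in Set.Ioo (0:ℝ) 1, f n t
      = T a b c n * (Real.Gamma (c+(n:ℝ)) * Real.Gamma s / Real.Gamma (c+(n:ℝ)+s)) := by
    intro n
    rw [hf_def]
    simp only
    rw [MeasureTheory.integral_const_mul, betaIntegral_real (by positivity) hs]
  have hsummand : ∀ t ∈ Set.Ioo (0:ℝ) 1, Summable (fun n => f n t) := by
    intro t ht
    have := (summable_T_mul_pow ha hb hc ht.1 ht.2).mul_right (t ^ (c-1) * (1-t) ^ (s-1))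
    refine this.congr (fun n => ?_)
    rw [hf_def]
    simp only
    rw [show (c+(n:ℝ))-1 = (c-1) + n by ring, Real.rpow_add ht.1, Real.rpow_natCast]
    ring
  have hint_eq : Set.EqOn (fun t : ℝ => t ^ (c - 1) * (1 - t) ^ (α + k - 1) * hyp2F1 a b c t)
      (fun t : ℝ => (∑' n, ENNReal.ofReal (f n t)).toReal) (Set.Ioo (0:ℝ) 1) := by
    intro t ht
    simp only
    rw [← ENNReal.ofReal_tsum_of_nonneg (fun n => hfnonneg n t ht) (hsummand t ht),
      ENNReal.toReal_ofReal (tsum_nonneg (fun n => hfnonneg n t ht))]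
    rw [hyp2F1_eq]
    have hfn : ∀ n : ℕ, f n t = (T a b c n * t^n) * (t^(c-1) * (1-t)^(s-1)) := by
      intro n
      rw [hf_def]
      simp only
      rw [show (c+(n:ℝ))-1 = (c-1) + n by ring, Real.rpow_add ht.1, Real.rpow_natCast]
      ring
    rw [tsum_congr hfn, _root_.tsum_mul_right, hs_def]
    ring
  rw [setIntegral_congr_fun measurableSet_Ioo hint_eq]
  have hmeasT : AEMeasurable (fun t => ∑' n, ENNReal.ofReal (f n t))
      (volume.restrict (Set.Ioo (0:ℝ) 1)) :=
    AEMeasurable.ennreal_tsum (fun n => (hfmeas n).aemeasurable)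
  have hfin : ∀ᵐ t ∂(volume.restrict (Set.Ioo (0:ℝ) 1)),
      (∑' n, ENNReal.ofReal (f n t)) < ⊤ := by
    refine (ae_restrict_iff' measurableSet_Ioo).2 (ae_of_all _ (fun t ht => ?_))
    rw [← ENNReal.ofReal_tsum_of_nonneg (fun n => hfnonneg n t ht) (hsummand t ht)]
    exact ENNReal.ofReal_lt_top
  rw [MeasureTheory.integral_toReal hmeasT hfin]
  rw [MeasureTheory.lintegral_tsum (fun n => (hfmeas n).aemeasurable)]
  have hlint : ∀ n : ℕ, ∫⁻ t in Set.Ioo (0:ℝ) 1, ENNReal.ofReal (f n t)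
      = ENNReal.ofReal ((Real.Gamma s * Real.Gamma c / Real.Gamma d) * T a b d n) := by
    intro n
    rw [← MeasureTheory.ofReal_integral_eq_lintegral_ofReal (hIntOn n)
      ((ae_restrict_iff' measurableSet_Ioo).2 (ae_of_all _ (fun t ht => hfnonneg n t ht)))]
    rw [hIval n]
    congr 1
    have e1 : c + (n:ℝ) + s = d + n := by rw [hd_def]; ring
    rw [e1, Gamma_add_nat hc n, Gamma_add_nat hd n, T, T]
    have p3 := poch_pos hc n
    have p4 := poch_pos hd n
    have hGc := Real.Gamma_pos_of_pos hc
    have hGd := Real.Gamma_pos_of_pos hd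
    have hF : (0:ℝ) < (Nat.factorial n : ℝ) := by positivity
    field_simp
  rw [tsum_congr hlint]
  have hGc := Real.Gamma_pos_of_pos hc
  have hGd := Real.Gamma_pos_of_pos hd
  have hGs := Real.Gamma_pos_of_pos hs
  have hsumd : Summable (fun n => (Real.Gamma s * Real.Gamma c / Real.Gamma d) * T a b d n) :=
    (summable_T ha hb habd).mul_left _
  rw [← ENNReal.ofReal_tsum_of_nonneg
    (fun n => mul_nonneg (by positivity) (T_pos ha hb hd n).le) hsumd]
  rw [ENNReal.toReal_ofReal (tsum_nonneg
    (fun n => mul_nonneg (by positivity) (T_pos ha hb hd n).le))]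
  rw [_root_.tsum_mul_left, gauss ha hb habd]
  rw [show d - a - b = (c-a-b+α)+k by rw [hd_def, hs_def]; ring,
    show d - a = (c-a-b+α)+b+k by rw [hd_def, hs_def]; ring,
    show d - b = (c-a-b+α)+a+k by rw [hd_def, hs_def]; ring]
  rw [hs_def]
  field_simp
end

section
/- Let n ≥ 1 and let p, q ≥ 0 be integers. For every p̃ ∈ H̃^{pq} one has □p̃ = (4pq + (2n-2)(p+q)) p̃ as functions on ℂ^n. -/
open MeasureTheory ENNReal NNReal

noncomputable instance (n : ℕ) : MeasurableSpace (EuclideanSpace ℂ (Fin n)) := borel _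
instance (n : ℕ) : BorelSpace (EuclideanSpace ℂ (Fin n)) := ⟨rfl⟩
/-- Lebesgue measure on `ℂⁿ`. -/
noncomputable instance (n : ℕ) : MeasureSpace (EuclideanSpace ℂ (Fin n)) :=
  ⟨Measure.map (⇑(PiLp.continuousLinearEquiv 2 ℝ (fun _ : Fin n => ℂ)).symm) volume⟩

abbrev En (n : ℕ) := EuclideanSpace ℂ (Fin n)

/-- Wirtinger derivative `∂f/∂z_j`. -/
noncomputable def wd (n : ℕ) (j : Fin n) (f : En n → ℂ) (z : En n) : ℂ :=
  (1/2 : ℂ) * (fderiv ℝ f z (EuclideanSpace.single j 1) -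
    Complex.I * fderiv ℝ f z (EuclideanSpace.single j Complex.I))

/-- Wirtinger derivative `∂f/∂z̄_j`. -/
noncomputable def wdb (n : ℕ) (j : Fin n) (f : En n → ℂ) (z : En n) : ℂ :=
  (1/2 : ℂ) * (fderiv ℝ f z (EuclideanSpace.single j 1) +
    Complex.I * fderiv ℝ f z (EuclideanSpace.single j Complex.I))

/-- The complex-tangential field `L_{jk} = z̄_j ∂/∂z_k − z̄_k ∂/∂z_j`. -/
noncomputable def Lop (n : ℕ) (j k : Fin n) (f : En n → ℂ) : En n → ℂ :=
  fun z => (starRingEnd ℂ) (z j) * wd n k f z - (starRingEnd ℂ) (z k) * wd n j f z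

/-- The complex-tangential field `L̄_{jk} = z_j ∂/∂z̄_k − z_k ∂/∂z̄_j`. -/
noncomputable def Lbarop (n : ℕ) (j k : Fin n) (f : En n → ℂ) : En n → ℂ :=
  fun z => z j * wdb n k f z - z k * wdb n j f z

/-- `□ = −Σ_{j,k} (L_{jk}L̄_{jk} + L̄_{jk}L_{jk})`. -/
noncomputable def BoxOp (n : ℕ) (f : En n → ℂ) : En n → ℂ :=
  fun z => -∑ j : Fin n, ∑ k : Fin n, (Lop n j k (Lbarop n j k f) z + Lbarop n j k (Lop n j k f) z)

/-- `f` is `M`-harmonic on the unit ball (of smoothness class `m`):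
`Δ̃f = 4(1-|z|²) Σ_{j,k}(δ_{jk} - z_j z̄_k) ∂²f/∂z_j∂z̄_k = 0` on the ball. -/
def MHarm (n : ℕ) (m : ℕ∞) (f : En n → ℂ) : Prop :=
  ContDiffOn ℝ m f (Metric.ball 0 1) ∧
  ∀ z ∈ Metric.ball (0 : En n) 1,
    (4 : ℂ) * (1 - (‖z‖ : ℂ) ^ 2) *
      ∑ j : Fin n, ∑ k : Fin n,
        ((if j = k then 1 else 0) - z j * (starRingEnd ℂ) (z k)) * wd n j (wdb n k f) z = 0

/-- `‖f‖²_s = ∫_{B_n} |f|² dμ_s` as an extended real. -/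
noncomputable def nsqE (n : ℕ) (s : ℝ) (f : En n → ℂ) : ℝ≥0∞ :=
  ∫⁻ z in Metric.ball (0 : En n) 1,
    ENNReal.ofReal (poch (s + 1) n / Real.pi ^ n * (1 - ‖z‖ ^ 2) ^ s * ‖f z‖ ^ 2)

/-- `‖f‖²_s = ∫_{B_n} |f|² dμ_s` as a real number. -/
noncomputable def normSqS (n : ℕ) (s : ℝ) (f : En n → ℂ) : ℝ :=
  ∫ z in Metric.ball (0 : En n) 1,
    poch (s + 1) n / Real.pi ^ n * (1 - ‖z‖ ^ 2) ^ s * ‖f z‖ ^ 2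

/-- The normalized surface measure `σ` on the unit sphere `∂B_n`. -/
noncomputable def sphMeas (n : ℕ) : Measure (Metric.sphere (0 : En n) 1) :=
  ((volume : Measure (En n)).toSphere Set.univ)⁻¹ • (volume : Measure (En n)).toSphere

/-- `‖g‖²_{∂B_n} = ∫_{∂B_n} |g|² dσ`. -/
noncomputable def normSqSphere (n : ℕ) (g : En n → ℂ) : ℝ :=
  ∫ ζ : Metric.sphere (0 : En n) 1, ‖g (ζ : En n)‖ ^ 2 ∂ sphMeas n

/-- Membership in `H̃^{pq}`: `P` is a polynomial in `z, z̄`, homogeneous of bidegree `(p,q)`,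
and harmonic for the Euclidean Laplacian `Δ = 4 Σ_j ∂²/∂z_j∂z̄_j` on `ℝ^{2n}`. -/
def InHtilde (n : ℕ) (p q : ℕ) (P : En n → ℂ) : Prop :=
  (∃ Q : MvPolynomial (Fin n ⊕ Fin n) ℂ,
    (∀ z : En n,
      P z = MvPolynomial.eval (Sum.elim (fun j => z j) (fun j => (starRingEnd ℂ) (z j))) Q) ∧
    ∀ d ∈ Q.support,
      (∑ j : Fin n, d (Sum.inl j)) = p ∧ (∑ j : Fin n, d (Sum.inr j)) = q) ∧
  ∀ z : En n, ∑ j : Fin n, wd n j (wdb n j P) z = 0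


-- ===== auxiliary development =====

open MvPolynomial

section Poly
variable {σ : Type*} [DecidableEq σ]

theorem my_pderiv_comm (i j : σ) (f : MvPolynomial σ ℂ) :
    pderiv i (pderiv j f) = pderiv j (pderiv i f) := by
  induction f using MvPolynomial.induction_on' with
  | monomial s a =>
    by_cases h : i = j
    · subst h; rfl
    · simp only [pderiv_monomial]
      rw [Finsupp.tsub_apply, Finsupp.tsub_apply, Finsupp.single_eq_of_ne' h,
        Finsupp.single_eq_of_ne' (Ne.symm h)]
      congr 1
      · rw [tsub_tsub, tsub_tsub, add_comm]
      · simp; ring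
  | add p q hp hq => simp [hp, hq]

theorem X_mul_pderiv_monomial (i : σ) (d : σ →₀ ℕ) (c : ℂ) :
    X i * pderiv i (monomial d c) = monomial d (c * (d i : ℂ)) := by
  rw [pderiv_monomial]
  by_cases h : d i = 0
  · simp [h]
  · have hd : (Finsupp.single i 1) + (d - Finsupp.single i 1) = d := by
      ext a
      by_cases ha : a = i
      · subst ha
        simp only [Finsupp.add_apply, Finsupp.tsub_apply, Finsupp.single_eq_same]
        omega
      · simp [Finsupp.single_eq_of_ne' (Ne.symm ha)]
    rw [show (X i : MvPolynomial σ ℂ) = X i ^ 1 by ring, ← monomial_single_add, hd]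

variable {n : ℕ}

/-- Generalized Euler operator. -/
noncomputable def Eul (w : Fin n → σ) (Q : MvPolynomial σ ℂ) : MvPolynomial σ ℂ :=
  ∑ j : Fin n, X (w j) * pderiv (w j) Q

theorem Eul_smul (w : Fin n → σ) (c : ℂ) (Q : MvPolynomial σ ℂ) :
    Eul w (c • Q) = c • Eul w Q := by
  unfold Eul
  rw [Finset.smul_sum]
  refine Finset.sum_congr rfl fun j _ => ?_
  rw [(pderiv (w j)).map_smul, mul_smul_comm]

theorem Eul_eq_smul (w : Fin n → σ) (Q : MvPolynomial σ ℂ) (p : ℕ)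
    (h : ∀ d ∈ Q.support, ∑ j, d (w j) = p) :
    Eul w Q = (p : ℂ) • Q := by
  have step1 : Eul w Q = ∑ d ∈ Q.support, Eul w (monomial d (coeff d Q)) := by
    unfold Eul
    conv_lhs => rw [Q.as_sum]
    simp only [map_sum, Finset.mul_sum]
    exact Finset.sum_comm
  rw [step1]
  have hm : ∀ d ∈ Q.support, Eul w (monomial d (coeff d Q)) =
      (p : ℂ) • monomial d (coeff d Q) := by
    intro d hd
    unfold Eul
    calc ∑ j, X (w j) * pderiv (w j) (monomial d (coeff d Q))
        = ∑ j, monomial d (coeff d Q * (d (w j) : ℂ)) :=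
          Finset.sum_congr rfl fun j _ => X_mul_pderiv_monomial _ _ _
      _ = monomial d (coeff d Q * ((∑ j, d (w j) : ℕ) : ℂ)) := by
          rw [Nat.cast_sum, Finset.mul_sum, map_sum]
      _ = (p : ℂ) • monomial d (coeff d Q) := by
          rw [h d hd, smul_monomial, smul_eq_mul, mul_comm]
  rw [Finset.sum_congr rfl hm, ← Finset.smul_sum, ← Q.as_sum]

/-- Generalized tangential operator. -/
noncomputable def Lgen (u v : Fin n → σ) (j k : Fin n) (Q : MvPolynomial σ ℂ) :
    MvPolynomial σ ℂ :=
  X (v j) * pderiv (u k) Q - X (v k) * pderiv (u j) Q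

theorem pair_Lgen (u v : Fin n → σ) (hu : Function.Injective u)
    (huv : ∀ a b, v a ≠ u b) (j k : Fin n) (Q : MvPolynomial σ ℂ) :
    Lgen u v j k (Lgen v u j k Q) =
      (if k = j then X (v j) * pderiv (v k) Q else 0)
      + X (u j) * X (v j) * pderiv (u k) (pderiv (v k) Q)
      - X (v j) * pderiv (v j) Q
      - X (v j) * X (u k) * pderiv (u k) (pderiv (v j) Q)
      - X (v k) * pderiv (v k) Q
      - X (v k) * X (u j) * pderiv (u j) (pderiv (v k) Q)
      + (if j = k then X (v k) * pderiv (v j) Q else 0)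
      + X (u k) * X (v k) * pderiv (u j) (pderiv (v j) Q) := by
  unfold Lgen
  by_cases h : j = k
  · subst h
    simp only [sub_self, map_zero, mul_zero, eq_self_iff_true, if_true]
    ring
  · have e1 : pderiv (u k) (X (u j) : MvPolynomial σ ℂ) = 0 :=
      pderiv_X_of_ne (fun he => h (hu he))
    have e2 : pderiv (u j) (X (u k) : MvPolynomial σ ℂ) = 0 :=
      pderiv_X_of_ne (fun he => h (hu he.symm))
    simp only [map_sub, pderiv_mul, e1, e2, pderiv_X_self, zero_mul, one_mul,
      if_neg h, if_neg (Ne.symm h), zero_add, add_zero]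
    ring

theorem Eul_Eul (u v : Fin n → σ) (huv : ∀ a b, v a ≠ u b) (Q : MvPolynomial σ ℂ) :
    Eul v (Eul u Q) =
      ∑ j : Fin n, ∑ k : Fin n, X (v j) * X (u k) * pderiv (u k) (pderiv (v j) Q) := by
  unfold Eul
  refine Finset.sum_congr rfl fun j _ => ?_
  rw [map_sum, Finset.mul_sum]
  refine Finset.sum_congr rfl fun k _ => ?_
  rw [pderiv_mul, pderiv_X_of_ne (huv j k).symm, zero_mul, zero_add, ← mul_assoc,
    my_pderiv_comm]

theorem sum_Lgen (u v : Fin n → σ) (hu : Function.Injective u)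
    (huv : ∀ a b, v a ≠ u b) (Q : MvPolynomial σ ℂ) :
    ∑ j : Fin n, ∑ k : Fin n, Lgen u v j k (Lgen v u j k Q) =
      2 • Eul v Q - (2 * n) • Eul v Q - 2 • Eul v (Eul u Q)
        + 2 • ((∑ j : Fin n, X (u j) * X (v j)) *
            ∑ k : Fin n, pderiv (u k) (pderiv (v k) Q)) := by
  rw [Finset.sum_congr rfl fun j _ =>
    Finset.sum_congr rfl fun k _ => pair_Lgen u v hu huv j k Q]
  simp only [Finset.sum_add_distrib, Finset.sum_sub_distrib]
  have h1 : ∑ j : Fin n, ∑ k : Fin n,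
      (if k = j then X (v j) * pderiv (v k) Q else 0) = Eul v Q := by
    unfold Eul
    refine Finset.sum_congr rfl fun j _ => ?_
    simp
  have h7 : ∑ j : Fin n, ∑ k : Fin n,
      (if j = k then X (v k) * pderiv (v j) Q else 0) = Eul v Q := by
    unfold Eul
    refine Finset.sum_congr rfl fun j _ => ?_
    simp
  have h2 : ∑ j : Fin n, ∑ k : Fin n, X (u j) * X (v j) * pderiv (u k) (pderiv (v k) Q)
      = (∑ j : Fin n, X (u j) * X (v j)) * ∑ k : Fin n, pderiv (u k) (pderiv (v k) Q) := by
    rw [Finset.sum_mul]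
    exact Finset.sum_congr rfl fun j _ => (Finset.mul_sum _ _ _).symm
  have h8 : ∑ j : Fin n, ∑ k : Fin n, X (u k) * X (v k) * pderiv (u j) (pderiv (v j) Q)
      = (∑ j : Fin n, X (u j) * X (v j)) * ∑ k : Fin n, pderiv (u k) (pderiv (v k) Q) := by
    rw [Finset.sum_comm, Finset.sum_mul]
    exact Finset.sum_congr rfl fun j _ => (Finset.mul_sum _ _ _).symm
  have h3 : ∑ j : Fin n, ∑ k : Fin n, X (v j) * pderiv (v j) Q = n • Eul v Q := by
    unfold Eul
    rw [Finset.smul_sum]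
    refine Finset.sum_congr rfl fun j _ => ?_
    rw [Finset.sum_const, Finset.card_univ, Fintype.card_fin]
  have h5 : ∑ j : Fin n, ∑ k : Fin n, X (v k) * pderiv (v k) Q = n • Eul v Q := by
    rw [Finset.sum_const, Finset.card_univ, Fintype.card_fin]; rfl
  have h4 : ∑ j : Fin n, ∑ k : Fin n, X (v j) * X (u k) * pderiv (u k) (pderiv (v j) Q)
      = Eul v (Eul u Q) := (Eul_Eul u v huv Q).symm
  have h6 : ∑ j : Fin n, ∑ k : Fin n, X (v k) * X (u j) * pderiv (u j) (pderiv (v k) Q)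
      = Eul v (Eul u Q) := by
    rw [Finset.sum_comm]; exact (Eul_Eul u v huv Q).symm
  rw [h1, h2, h3, h4, h5, h6, h7, h8]
  have : (2 * n) • Eul v Q = n • Eul v Q + n • Eul v Q := by
    rw [two_mul, add_smul]
  rw [this]
  abel

end Poly

open MvPolynomial ComplexConjugate

noncomputable def wmap (n : ℕ) (z : En n) : Fin n ⊕ Fin n → ℂ :=
  Sum.elim (fun j => z j) (fun j => (starRingEnd ℂ) (z j))

noncomputable def Lam (n : ℕ) : Fin n ⊕ Fin n → (En n →L[ℝ] ℂ)
  | .inl j => (EuclideanSpace.proj j : En n →L[ℂ] ℂ).restrictScalars ℝ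
  | .inr j => (Complex.conjCLE.toContinuousLinearMap).comp
      ((EuclideanSpace.proj j : En n →L[ℂ] ℂ).restrictScalars ℝ)

theorem Lam_inl (n : ℕ) (j : Fin n) (y : En n) : Lam n (.inl j) y = y j := rfl

theorem Lam_inr (n : ℕ) (j : Fin n) (y : En n) : Lam n (.inr j) y = conj (y j) := by
  simp [Lam]

theorem hasfderiv (n : ℕ) (Q : MvPolynomial (Fin n ⊕ Fin n) ℂ) (z : En n) :
    HasFDerivAt (fun z : En n => eval (wmap n z) Q)
      (∑ i : Fin n ⊕ Fin n, eval (wmap n z) (pderiv i Q) • Lam n i) z := by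
  induction Q using MvPolynomial.induction_on with
  | C a =>
    have h0 : (∑ i : Fin n ⊕ Fin n,
        eval (wmap n z) (pderiv i (C a : MvPolynomial (Fin n ⊕ Fin n) ℂ)) • Lam n i)
          = (0 : En n →L[ℝ] ℂ) := by
      refine Finset.sum_eq_zero fun i _ => ?_
      rw [pderiv_C, map_zero]; module
    rw [h0]
    simp only [eval_C]
    exact hasFDerivAt_const a z
  | add P R hP hR =>
    have hder : (∑ i : Fin n ⊕ Fin n, eval (wmap n z) (pderiv i (P + R)) • Lam n i)
        = (∑ i : Fin n ⊕ Fin n, eval (wmap n z) (pderiv i P) • Lam n i)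
          + ∑ i : Fin n ⊕ Fin n, eval (wmap n z) (pderiv i R) • Lam n i := by
      rw [← Finset.sum_add_distrib]
      refine Finset.sum_congr rfl fun i _ => ?_
      rw [map_add, map_add]
      module
    rw [hder]
    simp only [map_add]; exact hP.add hR
  | mul_X P i hP =>
    have hfun : (fun z : En n => wmap n z i) = ⇑(Lam n i) := by
      funext y
      cases i with
      | inl j => rfl
      | inr j => rw [Lam_inr]; rfl
    have hX : HasFDerivAt (fun z : En n => wmap n z i) (Lam n i) z := by
      rw [hfun]; exact (Lam n i).hasFDerivAt
    have hder : (∑ k : Fin n ⊕ Fin n, eval (wmap n z) (pderiv k (P * X i)) • Lam n k)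
        = eval (wmap n z) P • Lam n i
          + wmap n z i • ∑ k : Fin n ⊕ Fin n, eval (wmap n z) (pderiv k P) • Lam n k := by
      have hterm : ∀ k : Fin n ⊕ Fin n,
          eval (wmap n z) (pderiv k (P * X i)) • Lam n k
            = (if i = k then eval (wmap n z) P • Lam n k else 0)
              + wmap n z i • (eval (wmap n z) (pderiv k P) • Lam n k) := by
        intro k
        rw [pderiv_mul, pderiv_X, Pi.single_apply]
        by_cases h : i = k
        · subst h
          rw [if_pos rfl, if_pos rfl, mul_one, map_add, map_mul, eval_X]
          module
        · rw [if_neg h, if_neg h, mul_zero, add_zero, map_mul, eval_X]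
          module
      rw [Finset.sum_congr rfl fun k _ => hterm k, Finset.sum_add_distrib,
        Finset.sum_ite_eq, Finset.smul_sum]
      simp
    rw [hder]
    simp only [map_mul, eval_X]; exact hP.mul hX

theorem wd_eval (n : ℕ) (j : Fin n) (Q : MvPolynomial (Fin n ⊕ Fin n) ℂ) (z : En n) :
    wd n j (fun z => eval (wmap n z) Q) z = eval (wmap n z) (pderiv (Sum.inl j) Q) := by
  unfold wd
  rw [(hasfderiv n Q z).fderiv]
  simp only [Fintype.sum_sum_type, ContinuousLinearMap.add_apply, ContinuousLinearMap.coe_sum',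
    Finset.sum_apply, ContinuousLinearMap.coe_smul', Pi.smul_apply, Lam_inl, Lam_inr,
    EuclideanSpace.single_apply, smul_eq_mul, mul_ite, mul_one, mul_zero, apply_ite conj,
    map_one, map_zero, Complex.conj_I, Finset.sum_ite_eq', Finset.mem_univ, if_true, mul_neg]
  set A := eval (wmap n z) (pderiv (Sum.inl j) Q)
  set B := eval (wmap n z) (pderiv (Sum.inr j) Q)
  have hI := Complex.I_mul_I
  linear_combination (-(A - B)/2) * hI

theorem wdb_eval (n : ℕ) (j : Fin n) (Q : MvPolynomial (Fin n ⊕ Fin n) ℂ) (z : En n) :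
    wdb n j (fun z => eval (wmap n z) Q) z = eval (wmap n z) (pderiv (Sum.inr j) Q) := by
  unfold wdb
  rw [(hasfderiv n Q z).fderiv]
  simp only [Fintype.sum_sum_type, ContinuousLinearMap.add_apply, ContinuousLinearMap.coe_sum',
    Finset.sum_apply, ContinuousLinearMap.coe_smul', Pi.smul_apply, Lam_inl, Lam_inr,
    EuclideanSpace.single_apply, smul_eq_mul, mul_ite, mul_one, mul_zero, apply_ite conj,
    map_one, map_zero, Complex.conj_I, Finset.sum_ite_eq', Finset.mem_univ, if_true, mul_neg]
  set A := eval (wmap n z) (pderiv (Sum.inl j) Q)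
  set B := eval (wmap n z) (pderiv (Sum.inr j) Q)
  have hI := Complex.I_mul_I
  linear_combination ((A - B)/2) * hI


theorem wd_eval' (n : ℕ) (j : Fin n) (Q : MvPolynomial (Fin n ⊕ Fin n) ℂ) :
    wd n j (fun z => eval (wmap n z) Q) = fun z => eval (wmap n z) (pderiv (Sum.inl j) Q) :=
  funext fun z => wd_eval n j Q z

theorem wdb_eval' (n : ℕ) (j : Fin n) (Q : MvPolynomial (Fin n ⊕ Fin n) ℂ) :
    wdb n j (fun z => eval (wmap n z) Q) = fun z => eval (wmap n z) (pderiv (Sum.inr j) Q) :=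
  funext fun z => wdb_eval n j Q z

theorem lop_eval (n : ℕ) (j k : Fin n) (Q : MvPolynomial (Fin n ⊕ Fin n) ℂ) :
    Lop n j k (fun z => eval (wmap n z) Q)
      = fun z => eval (wmap n z) (Lgen Sum.inl Sum.inr j k Q) := by
  funext z
  unfold Lop Lgen
  rw [wd_eval, wd_eval, map_sub, map_mul, map_mul, eval_X, eval_X]
  rfl

theorem lbarop_eval (n : ℕ) (j k : Fin n) (Q : MvPolynomial (Fin n ⊕ Fin n) ℂ) :
    Lbarop n j k (fun z => eval (wmap n z) Q)
      = fun z => eval (wmap n z) (Lgen Sum.inr Sum.inl j k Q) := by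
  funext z
  unfold Lbarop Lgen
  rw [wdb_eval, wdb_eval, map_sub, map_mul, map_mul, eval_X, eval_X]
  rfl

/-- `□p̃ = (4pq + (2n-2)(p+q))·p̃` for `p̃ ∈ H̃^{pq}`. -/
theorem statement17 (n p q : ℕ) (hn : 1 ≤ n) (P : En n → ℂ) (hP : InHtilde n p q P) :
    ∀ z : En n, BoxOp n P z = (4 * (p : ℂ) * q + (2 * (n : ℂ) - 2) * ((p : ℂ) + q)) * P z := by
  obtain ⟨⟨Q, hQe, hsupp⟩, hharm⟩ := hP
  have hPF : P = fun z => eval (wmap n z) Q := funext hQe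
  rw [hPF] at hharm ⊢
  -- harmonicity in polynomial form
  have hharm' : ∀ z : En n,
      eval (wmap n z) (∑ k : Fin n, pderiv (Sum.inl k) (pderiv (Sum.inr k) Q)) = 0 := by
    intro z
    rw [map_sum]
    have := hharm z
    simp only [wdb_eval'] at this
    calc ∑ k : Fin n, eval (wmap n z) (pderiv (Sum.inl k) (pderiv (Sum.inr k) Q))
        = ∑ k : Fin n, wd n k (fun z => eval (wmap n z) (pderiv (Sum.inr k) Q)) z :=
          Finset.sum_congr rfl fun k _ => (wd_eval n k _ z).symm
      _ = 0 := this
  intro z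
  unfold BoxOp
  have hsum : (∑ j : Fin n, ∑ k : Fin n,
      (Lop n j k (Lbarop n j k (fun z => eval (wmap n z) Q)) z
        + Lbarop n j k (Lop n j k (fun z => eval (wmap n z) Q)) z))
      = eval (wmap n z)
        ((∑ j : Fin n, ∑ k : Fin n,
            Lgen Sum.inl Sum.inr j k (Lgen Sum.inr Sum.inl j k Q))
          + ∑ j : Fin n, ∑ k : Fin n,
            Lgen Sum.inr Sum.inl j k (Lgen Sum.inl Sum.inr j k Q)) := by
    rw [map_add, map_sum, map_sum, ← Finset.sum_add_distrib]
    refine Finset.sum_congr rfl fun j _ => ?_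
    rw [map_sum, map_sum, ← Finset.sum_add_distrib]
    refine Finset.sum_congr rfl fun k _ => ?_
    rw [lbarop_eval, lop_eval, lop_eval, lbarop_eval]
  rw [hsum,
    sum_Lgen Sum.inl Sum.inr Sum.inl_injective (fun a b => Sum.inr_ne_inl),
    sum_Lgen Sum.inr Sum.inl Sum.inr_injective (fun a b => Sum.inl_ne_inr)]
  have hEa : Eul Sum.inl Q = (p : ℂ) • Q :=
    Eul_eq_smul Sum.inl Q p (fun d hd => (hsupp d hd).1)
  have hEb : Eul Sum.inr Q = (q : ℂ) • Q :=
    Eul_eq_smul Sum.inr Q q (fun d hd => (hsupp d hd).2)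
  have hLap2 : (∑ k : Fin n, pderiv (Sum.inr k) (pderiv (Sum.inl k) Q))
      = ∑ k : Fin n, pderiv (Sum.inl k) (pderiv (Sum.inr k) Q) :=
    Finset.sum_congr rfl fun k _ => my_pderiv_comm _ _ _
  rw [hLap2, hEa, hEb, Eul_smul, Eul_smul, hEa, hEb]
  have hsmul : ∀ (c : ℂ) (R : MvPolynomial (Fin n ⊕ Fin n) ℂ),
      eval (wmap n z) (c • R) = c * eval (wmap n z) R := by
    intro c R
    rw [smul_eq_C_mul, map_mul, eval_C]
  simp only [map_add, map_sub, map_nsmul, map_mul, hsmul, hharm' z, mul_zero, smul_eq_mul,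
    nsmul_eq_mul, map_ofNat, map_natCast]
  push_cast
  ring
end

section
/- Let n ≥ 1 and let p, q ≥ 1 be integers. Then lim_{r→1⁻} (1-r) · (r d/dr)^{n+1} [ r^{p+q} ₂F₁(p,q;p+q+n;r²) ] = 2^n Γ(p+q+n) / (Γ(p)Γ(q)), where (r d/dr)^{n+1} denotes the (n+1)-fold iterate of the operator u(r) ↦ r u′(r) applied to the function r ↦ r^{p+q} ₂F₁(p,q;p+q+n;r²) on (0,1). -/
open MeasureTheory ENNReal NNReal

/-- The operator `u(r) ↦ r u'(r)`. -/
noncomputable def opN (g : ℝ → ℝ) : ℝ → ℝ := fun r => r * deriv g r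


open Filter Finset Set Topology

lemma asc_add (a i j : ℕ) :
    a.ascFactorial (i + j) = a.ascFactorial i * (a + i).ascFactorial j := by
  induction j with
  | zero => simp
  | succ j ih =>
      rw [← Nat.add_assoc, Nat.ascFactorial_succ, Nat.ascFactorial_succ, ih]
      ring_nf

lemma asc_cast_prod (a s : ℕ) :
    ((a.ascFactorial s : ℕ) : ℝ) = ∏ j ∈ Finset.range s, ((a : ℝ) + j) := by
  induction s with
  | zero => simp
  | succ s ih =>
      rw [Nat.ascFactorial_succ, Finset.prod_range_succ, ← ih]
      push_cast; ring

lemma poch_nat_cast (a : ℕ) (ha : 1 ≤ a) (k : ℕ) :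
    poch (a : ℝ) k = (a.ascFactorial k : ℝ) := by
  obtain ⟨a', rfl⟩ : ∃ a', a = a' + 1 := ⟨a - 1, (Nat.succ_pred_eq_of_pos ha).symm⟩
  unfold poch
  have h1 : ((a' + 1 : ℕ) : ℝ) + (k : ℕ) = ((a' + k : ℕ) : ℝ) + 1 := by push_cast; ring
  rw [h1, Real.Gamma_nat_eq_factorial,
    show (((a' + 1 : ℕ)) : ℝ) = ((a' : ℕ) : ℝ) + 1 by push_cast; ring,
    Real.Gamma_nat_eq_factorial,
    div_eq_iff (by exact_mod_cast (Nat.factorial_pos a').ne')]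
  exact_mod_cast (Nat.factorial_mul_ascFactorial a' k).symm.trans (by ring)
open Filter Finset Set Topology

section coeffs
variable (n p q : ℕ)

/-- The Taylor coefficient of ₂F₁. -/
noncomputable def Acoef (k : ℕ) : ℝ :=
  poch (p : ℝ) k * poch (q : ℝ) k / (poch ((p:ℝ) + q + n) k * (Nat.factorial k))

lemma Acoef_closed (hn : 1 ≤ n) (hp : 1 ≤ p) (hq : 1 ≤ q) (k : ℕ) :
    Acoef n p q k = (((p+q+n-1).factorial : ℝ) / (((p-1).factorial : ℝ) * ((q-1).factorial : ℝ)))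
      * ((k+1).ascFactorial (q-1) : ℝ) / ((p+k).ascFactorial (q+n) : ℝ) := by
  obtain ⟨p', rfl⟩ : ∃ p', p = p' + 1 := ⟨p - 1, (Nat.succ_pred_eq_of_pos hp).symm⟩
  obtain ⟨q', rfl⟩ : ∃ q', q = q' + 1 := ⟨q - 1, (Nat.succ_pred_eq_of_pos hq).symm⟩
  obtain ⟨n', rfl⟩ : ∃ n', n = n' + 1 := ⟨n - 1, (Nat.succ_pred_eq_of_pos hn).symm⟩
  have hc : ((p' + 1 : ℕ) : ℝ) + (q' + 1 : ℕ) + (n' + 1 : ℕ) = ((p' + q' + n' + 3 : ℕ) : ℝ) := by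
    push_cast; ring
  rw [Acoef, hc, poch_nat_cast _ (by omega), poch_nat_cast _ (by omega),
    poch_nat_cast _ (by omega)]
  have e1 : p' + 1 + (q' + 1) + (n' + 1) - 1 = p' + q' + n' + 2 := by omega
  have e2 : p' + 1 - 1 = p' := by omega
  have e3 : q' + 1 - 1 = q' := by omega
  rw [e1, e2, e3]
  -- key ℕ identity
  have key : (p'+1).ascFactorial k * (q'+1).ascFactorial k * ((p'+1+k).ascFactorial (q'+1+(n'+1)))
      * (p'.factorial * q'.factorial)
      = (p'+q'+n'+2).factorial * ((k+1).ascFactorial q') *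
        ((p'+q'+n'+3).ascFactorial k * k.factorial) := by
    have h1 : (p'+1).ascFactorial k * (p'+1+k).ascFactorial (q'+n'+2)
        = (p'+1).ascFactorial (k + (q'+n'+2)) := (asc_add _ _ _).symm
    have h2 : p'.factorial * (p'+1).ascFactorial (k + (q'+n'+2)) = (p' + (k+(q'+n'+2))).factorial :=
      Nat.factorial_mul_ascFactorial _ _
    have h3 : q'.factorial * (q'+1).ascFactorial k = (q' + k).factorial :=
      Nat.factorial_mul_ascFactorial _ _
    have h4 : (p'+q'+n'+2).factorial * (p'+q'+n'+3).ascFactorial k = (p'+q'+n'+2+k).factorial :=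
      Nat.factorial_mul_ascFactorial _ _
    have h5 : k.factorial * (k+1).ascFactorial q' = (k + q').factorial :=
      Nat.factorial_mul_ascFactorial _ _
    have e : q' + 1 + (n' + 1) = q' + n' + 2 := by omega
    rw [e]
    calc (p'+1).ascFactorial k * (q'+1).ascFactorial k * ((p'+1+k).ascFactorial (q'+n'+2))
        * (p'.factorial * q'.factorial)
        = (p'.factorial * ((p'+1).ascFactorial k * (p'+1+k).ascFactorial (q'+n'+2))) *
          (q'.factorial * (q'+1).ascFactorial k) := by ring
      _ = (p' + (k+(q'+n'+2))).factorial * (q' + k).factorial := by rw [h1, h2, h3]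
      _ = (p'+q'+n'+2+k).factorial * (k + q').factorial := by
            congr 2 <;> omega
      _ = _ := by rw [← h4, ← h5]; ring
  have hf1 : ((p'+q'+n'+3).ascFactorial k : ℝ) ≠ 0 := by
    exact_mod_cast (Nat.ascFactorial_pos (p'+q'+n'+2) k).ne'
  have hf2 : ((k.factorial : ℕ) : ℝ) ≠ 0 := by exact_mod_cast k.factorial_pos.ne'
  have hf3 : ((p'.factorial : ℕ) : ℝ) ≠ 0 := by exact_mod_cast p'.factorial_pos.ne'
  have hf4 : ((q'.factorial : ℕ) : ℝ) ≠ 0 := by exact_mod_cast q'.factorial_pos.ne'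
  have hf5 : (((p'+1+k).ascFactorial (q'+1+(n'+1)) : ℕ) : ℝ) ≠ 0 := by
    have : 0 < (p'+1+k).ascFactorial (q'+1+(n'+1)) := by
      have := Nat.ascFactorial_pos (p'+k) (q'+1+(n'+1))
      simpa [Nat.add_right_comm] using this
    exact_mod_cast this.ne'
  field_simp
  have key' : (p'+1).ascFactorial k * (q'+1).ascFactorial k *
      (p'.factorial * q'.factorial * ((p'+1+k).ascFactorial (q'+1+(n'+1))))
      = (p'+q'+n'+2).factorial * ((k+1).ascFactorial q') *
        ((p'+q'+n'+3).ascFactorial k * k.factorial) := by rw [← key]; ring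
  have h := congrArg (Nat.cast : ℕ → ℝ) key'
  push_cast at h ⊢
  linear_combination h
end coeffs
lemma tendsto_aux1 (α β : ℝ) :
    Tendsto (fun k : ℕ => (β + 2 * (k:ℝ)) / ((k:ℝ) + α)) atTop (𝓝 2) := by
  have h0 : Tendsto (fun k : ℕ => (k:ℝ) + α) atTop atTop :=
    tendsto_atTop_add_const_right _ α tendsto_natCast_atTop_atTop
  have h1 : Tendsto (fun k : ℕ => 2 + (β - 2*α) * ((k:ℝ) + α)⁻¹) atTop (𝓝 2) := by
    have := (h0.inv_tendsto_atTop).const_mul (β - 2*α)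
    simpa using (tendsto_const_nhds (x := (2:ℝ))).add this
  apply h1.congr'
  filter_upwards [h0.eventually_gt_atTop 0] with k hk
  field_simp
  ring

lemma tendsto_aux2 (α β : ℝ) :
    Tendsto (fun k : ℕ => ((k:ℝ) + β) / ((k:ℝ) + α)) atTop (𝓝 1) := by
  have h0 : Tendsto (fun k : ℕ => (k:ℝ) + α) atTop atTop :=
    tendsto_atTop_add_const_right _ α tendsto_natCast_atTop_atTop
  have h1 : Tendsto (fun k : ℕ => 1 + (β - α) * ((k:ℝ) + α)⁻¹) atTop (𝓝 1) := by
    have := (h0.inv_tendsto_atTop).const_mul (β - α)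
    simpa using (tendsto_const_nhds (x := (1:ℝ))).add this
  apply h1.congr'
  filter_upwards [h0.eventually_gt_atTop 0] with k hk
  field_simp
  ring

lemma Acoef_tendsto (n p q : ℕ) (hn : 1 ≤ n) (hp : 1 ≤ p) (hq : 1 ≤ q) :
    Tendsto (fun k : ℕ => Acoef n p q k * ((p + q + 2*k : ℕ) : ℝ) ^ (n+1)) atTop
      (𝓝 (2^(n+1) * (((p+q+n-1).factorial : ℝ) /
        (((p-1).factorial : ℝ) * ((q-1).factorial : ℝ))))) := by
  set C0 : ℝ := ((p+q+n-1).factorial : ℝ) / (((p-1).factorial : ℝ) * ((q-1).factorial : ℝ)) with hC0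
  have heq : ∀ k : ℕ, Acoef n p q k * ((p + q + 2*k : ℕ) : ℝ) ^ (n+1)
      = C0 * (∏ j ∈ Finset.range (n+1), ((p:ℝ) + q + 2*(k:ℝ)) / ((k:ℝ) + ((p:ℝ)+j)))
          * (∏ j ∈ Finset.range (q-1), ((k:ℝ) + (1+(j:ℝ))) / ((k:ℝ) + ((p:ℝ)+(n+1)+j))) := by
    intro k
    have hsplit : q + n = (n+1) + (q-1) := by omega
    have hprod1 : (((p+k).ascFactorial (q+n) : ℕ) : ℝ)
        = (∏ j ∈ Finset.range (n+1), ((k:ℝ) + ((p:ℝ)+j))) *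
          (∏ j ∈ Finset.range (q-1), ((k:ℝ) + ((p:ℝ)+(n+1)+j))) := by
      rw [asc_cast_prod, hsplit, Finset.prod_range_add]
      congr 1
      · exact Finset.prod_congr rfl fun j _ => by push_cast; ring
      · exact Finset.prod_congr rfl fun j _ => by push_cast; ring
    have hprod2 : (((k+1).ascFactorial (q-1) : ℕ) : ℝ)
        = ∏ j ∈ Finset.range (q-1), ((k:ℝ) + (1+(j:ℝ))) := by
      rw [asc_cast_prod]
      exact Finset.prod_congr rfl fun j _ => by push_cast; ring
    have hpow : ((p + q + 2*k : ℕ) : ℝ) ^ (n+1)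
        = ∏ _j ∈ Finset.range (n+1), ((p:ℝ) + q + 2*(k:ℝ)) := by
      rw [Finset.prod_const, Finset.card_range]; push_cast; ring
    have hne1 : ∀ j ∈ Finset.range (n+1), ((k:ℝ) + ((p:ℝ)+j)) ≠ 0 := fun j _ => by positivity
    have hne2 : ∀ j ∈ Finset.range (q-1), ((k:ℝ) + ((p:ℝ)+(n+1)+j)) ≠ 0 := fun j _ => by positivity
    rw [Acoef_closed n p q hn hp hq, hprod1, hprod2, hpow, Finset.prod_div_distrib,
      Finset.prod_div_distrib, ← hC0]
    have hD1 : (∏ j ∈ Finset.range (n+1), ((k:ℝ) + ((p:ℝ)+j))) ≠ 0 := Finset.prod_ne_zero_iff.2 hne1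
    have hD2 : (∏ j ∈ Finset.range (q-1), ((k:ℝ) + ((p:ℝ)+(n+1)+j))) ≠ 0 :=
      Finset.prod_ne_zero_iff.2 hne2
    field_simp
  rw [show (2:ℝ)^(n+1) * C0 = C0 * (∏ _j ∈ Finset.range (n+1), (2:ℝ)) *
      (∏ _j ∈ Finset.range (q-1), (1:ℝ)) by
    rw [Finset.prod_const, Finset.prod_const, Finset.card_range, Finset.card_range]; ring]
  refine Tendsto.congr (fun k => (heq k).symm) ?_
  refine Tendsto.mul (Tendsto.mul tendsto_const_nhds ?_) ?_
  · exact tendsto_finset_prod _ fun j _ => by simpa using tendsto_aux1 ((p:ℝ)+j) ((p:ℝ)+q)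
  · exact tendsto_finset_prod _ fun j _ => tendsto_aux2 ((p:ℝ)+(n+1)+j) (1+(j:ℝ))
set_option maxHeartbeats 1000000 in
lemma abel_limit (b : ℕ → ℝ) (L : ℝ) (hb : Tendsto b atTop (𝓝 L)) :
    Tendsto (fun x : ℝ => (1 - x) * ∑' k, b k * x ^ k) (𝓝[<] (1:ℝ)) (𝓝 L) := by
  -- boundedness of b
  obtain ⟨M, hM⟩ : ∃ M : ℝ, ∀ k, |b k| ≤ M := by
    obtain ⟨M, hM⟩ := (hb.norm.bddAbove_range)
    exact ⟨M, fun k => hM ⟨k, rfl⟩⟩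
  have hsum : ∀ x : ℝ, |x| < 1 → Summable (fun k => b k * x ^ k) := by
    intro x hx
    apply Summable.of_norm_bounded
      ((summable_geometric_of_lt_one (abs_nonneg x) hx).mul_left M)
    intro k
    rw [norm_mul, norm_pow, Real.norm_eq_abs, Real.norm_eq_abs]
    exact mul_le_mul_of_nonneg_right (hM k) (by positivity)
  rw [Metric.tendsto_nhdsWithin_nhds]
  intro ε hε
  obtain ⟨N, hN⟩ : ∃ N, ∀ k, N ≤ k → |b k - L| ≤ ε/4 := by
    have := (Metric.tendsto_atTop.1 hb) (ε/4) (by positivity)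
    obtain ⟨N, hN⟩ := this
    exact ⟨N, fun k hk => le_of_lt (by simpa [Real.dist_eq] using hN k hk)⟩
  set S : ℝ := ∑ k ∈ Finset.range N, |b k - L| with hS
  have hS0 : 0 ≤ S := Finset.sum_nonneg fun k _ => abs_nonneg _
  refine ⟨min 1 (ε/(4*(S+1))), by positivity, ?_⟩
  intro x hx hdist
  rw [Real.dist_eq] at hdist ⊢
  have hx1 : x < 1 := hx
  have hxlb : 1 - min 1 (ε/(4*(S+1))) < x := by
    have : |x - 1| = 1 - x := by rw [abs_sub_comm, abs_of_pos (by linarith)]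
    rw [this] at hdist; linarith
  have hmin1 : min 1 (ε/(4*(S+1))) ≤ 1 := min_le_left _ _
  have hx0 : 0 < x := by linarith
  have hxabs : |x| < 1 := by rw [abs_of_pos hx0]; exact hx1
  have hx1' : (0:ℝ) < 1 - x := by linarith
  -- geometric facts
  have hgeo : ∑' k : ℕ, x ^ k = (1-x)⁻¹ := tsum_geometric_of_lt_one hx0.le hx1
  have hgsum : Summable (fun k : ℕ => x ^ k) := summable_geometric_of_lt_one hx0.le hx1
  have hbsum := hsum x hxabs
  have hLsum : Summable (fun k : ℕ => L * x ^ k) := hgsum.mul_left L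
  have hdsum : Summable (fun k : ℕ => (b k - L) * x ^ k) := by
    have := hbsum.sub hLsum
    apply this.congr; intro k; ring
  -- main rewrite
  have key : (1 - x) * ∑' k, b k * x ^ k - L = (1 - x) * ∑' k, (b k - L) * x ^ k := by
    have h1 : ∑' k, (b k - L) * x ^ k = (∑' k, b k * x ^ k) - L * (1-x)⁻¹ := by
      rw [← hgeo, ← _root_.tsum_mul_left]
      rw [← Summable.tsum_sub hbsum (hgsum.mul_left L)]
      apply tsum_congr; intro k; ring
    rw [h1, mul_sub]
    field_simp
  rw [key]
  -- split the tail
  have hsplit := Summable.sum_add_tsum_nat_add N hdsum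
  have htail : |∑' k, (b (k+N) - L) * x ^ (k+N)| ≤ (ε/4) * (1-x)⁻¹ := by
    have hts : Summable (fun k : ℕ => (b (k+N) - L) * x ^ (k+N)) :=
      ((_root_.summable_nat_add_iff N).2 hdsum)
    calc |∑' k, (b (k+N) - L) * x ^ (k+N)|
        ≤ ∑' k : ℕ, (ε/4) * x ^ k := by
          apply (norm_tsum_le_tsum_norm (hts.norm)).trans
          apply Summable.tsum_le_tsum _ hts.norm (hgsum.mul_left (ε/4))
          intro k
          rw [norm_mul, Real.norm_eq_abs, Real.norm_eq_abs, abs_pow, abs_of_pos hx0]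
          have h1 : |b (k+N) - L| ≤ ε/4 := hN _ (by omega)
          have h2 : x ^ (k+N) ≤ x ^ k := pow_le_pow_of_le_one hx0.le hx1.le (by omega)
          have h3 : (0:ℝ) ≤ x ^ (k+N) := by positivity
          nlinarith [pow_nonneg hx0.le k]
      _ = (ε/4) * (1-x)⁻¹ := by rw [_root_.tsum_mul_left, hgeo]
  have hhead : |∑ k ∈ Finset.range N, (b k - L) * x ^ k| ≤ S := by
    calc |∑ k ∈ Finset.range N, (b k - L) * x ^ k|
        ≤ ∑ k ∈ Finset.range N, |(b k - L) * x ^ k| := Finset.abs_sum_le_sum_abs _ _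
      _ ≤ ∑ k ∈ Finset.range N, |b k - L| := by
          apply Finset.sum_le_sum; intro k _
          rw [abs_mul, abs_pow, abs_of_pos hx0]
          have : x ^ k ≤ 1 := pow_le_one₀ hx0.le hx1.le
          nlinarith [abs_nonneg (b k - L), pow_nonneg hx0.le k]
      _ = S := rfl
  have habs : |∑' k, (b k - L) * x ^ k| ≤ S + (ε/4) * (1-x)⁻¹ := by
    rw [← hsplit]
    exact (abs_add_le _ _).trans (add_le_add hhead htail)
  have hfinal : |(1-x) * ∑' k, (b k - L) * x ^ k| ≤ (1-x) * S + ε/4 := by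
    rw [abs_mul, abs_of_pos hx1']
    have := mul_le_mul_of_nonneg_left habs hx1'.le
    calc (1-x) * |∑' k, (b k - L) * x ^ k| ≤ (1-x) * (S + (ε/4) * (1-x)⁻¹) := this
      _ = (1-x) * S + (1-x) * (1-x)⁻¹ * (ε/4) := by ring
      _ = (1-x) * S + ε/4 := by rw [mul_inv_cancel₀ hx1'.ne']; ring
  have hsmall : (1-x) * S ≤ ε/4 := by
    have hminr : 1 - x < ε/(4*(S+1)) := by
      have : 1 - x < min 1 (ε/(4*(S+1))) := by linarith
      exact lt_of_lt_of_le this (min_le_right _ _)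
    have h4 : (1-x) * (S+1) ≤ ε/4 := by
      have h5 := mul_le_mul_of_nonneg_right hminr.le (by linarith : (0:ℝ) ≤ S+1)
      have h6 : ε/(4*(S+1)) * (S+1) = ε/4 := by
        field_simp
      linarith
    nlinarith
  calc |(1 - x) * ∑' k, (b k - L) * x ^ k| ≤ (1-x) * S + ε/4 := hfinal
    _ ≤ ε/4 + ε/4 := by linarith
    _ < ε := by linarith
lemma Acoef_pos (n p q : ℕ) (hn : 1 ≤ n) (hp : 1 ≤ p) (hq : 1 ≤ q) (k : ℕ) :
    0 < Acoef n p q k := by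
  rw [Acoef_closed n p q hn hp hq k]
  have h1 : 0 < (k+1).ascFactorial (q-1) := Nat.ascFactorial_pos k (q-1)
  have h2 : 0 < (p+k).ascFactorial (q+n) := by
    have := Nat.ascFactorial_pos (p-1+k) (q+n)
    have he : p - 1 + k + 1 = p + k := by omega
    rwa [he] at this
  have h3 : 0 < (p+q+n-1).factorial := Nat.factorial_pos _
  have h4 : 0 < (p-1).factorial := Nat.factorial_pos _
  have h5 : 0 < (q-1).factorial := Nat.factorial_pos _
  positivity

section deriv_part

variable (n p q : ℕ) (hn : 1 ≤ n) (hp : 1 ≤ p) (hq : 1 ≤ q)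
variable (B : ℝ) (hB : ∀ k, Acoef n p q k * ((p + q + 2*k : ℕ) : ℝ) ^ (n+1) ≤ B)

include hn hp hq hB in
lemma hasDerivAt_F (j : ℕ) (hj : j + 1 ≤ n + 1) (r : ℝ) (hr : r ∈ Set.Ioo (-1:ℝ) 1) :
    HasDerivAt (fun x : ℝ => ∑' k, Acoef n p q k * ((p + q + 2*k : ℕ) : ℝ) ^ j * x ^ (p + q + 2*k))
      (∑' k, Acoef n p q k * ((p + q + 2*k : ℕ) : ℝ) ^ j *
        (((p + q + 2*k : ℕ) : ℝ) * r ^ (p + q + 2*k - 1))) r := by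
  obtain ⟨hr1, hr2⟩ := hr
  set ρ : ℝ := (|r| + 1) / 2 with hρ
  have habs : |r| < 1 := abs_lt.2 ⟨hr1, hr2⟩
  have hρ0 : 0 < ρ := by positivity
  have hρ1 : ρ < 1 := by rw [hρ]; linarith
  have hrρ : |r| < ρ := by rw [hρ]; linarith [abs_nonneg r]
  have hu : Summable (fun k : ℕ => B * ρ ^ (p + q + 2*k - 1)) := by
    have h2 : Summable (fun k : ℕ => (B * ρ ^ (p + q - 1)) * (ρ^2) ^ k) :=
      (summable_geometric_of_lt_one (by positivity) (by nlinarith)).mul_left _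
    apply h2.congr
    intro k
    have he : p + q + 2*k - 1 = (p + q - 1) + 2*k := by omega
    rw [he, pow_add, pow_mul]
    ring
  refine hasDerivAt_tsum_of_isPreconnected
    (g := fun (k : ℕ) (y : ℝ) => Acoef n p q k * ((p + q + 2*k : ℕ) : ℝ) ^ j * y ^ (p + q + 2*k))
    (g' := fun (k : ℕ) (y : ℝ) => Acoef n p q k * ((p + q + 2*k : ℕ) : ℝ) ^ j *
      (((p + q + 2*k : ℕ) : ℝ) * y ^ (p + q + 2*k - 1)))
    hu (isOpen_Ioo (a := -ρ) (b := ρ))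
    (isPreconnected_Ioo) (fun k y _ => ?_) (fun k y hy => ?_) (y₀ := 0)
    (by constructor <;> simp [hρ0, hρ0.le]) ?_ (abs_lt.1 hrρ)
  · exact (hasDerivAt_pow (p + q + 2*k) y).const_mul
      (Acoef n p q k * ((p + q + 2*k : ℕ) : ℝ) ^ j)
  · have hA := Acoef_pos n p q hn hp hq k
    have hyρ : |y| ≤ ρ := by
      obtain ⟨h1, h2⟩ := hy
      exact abs_le.2 ⟨by linarith, by linarith⟩
    have hw1 : (1:ℝ) ≤ ((p + q + 2*k : ℕ) : ℝ) := by
      have : 1 ≤ p + q + 2*k := by omega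
      exact_mod_cast this
    have hpow : ((p + q + 2*k : ℕ) : ℝ) ^ (j+1) ≤ ((p + q + 2*k : ℕ) : ℝ) ^ (n+1) :=
      pow_le_pow_right₀ hw1 hj
    have hAB : Acoef n p q k * ((p + q + 2*k : ℕ) : ℝ) ^ (j+1) ≤ B :=
      le_trans (by nlinarith) (hB k)
    calc ‖Acoef n p q k * ((p + q + 2*k : ℕ) : ℝ) ^ j *
          (((p + q + 2*k : ℕ) : ℝ) * y ^ (p + q + 2*k - 1))‖
        = Acoef n p q k * ((p + q + 2*k : ℕ) : ℝ) ^ (j+1) * |y| ^ (p + q + 2*k - 1) := by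
          simp only [Real.norm_eq_abs, abs_mul, abs_pow, abs_of_pos hA,
            abs_of_nonneg (by positivity : (0:ℝ) ≤ ((p + q + 2*k : ℕ) : ℝ))]
          ring
      _ ≤ B * ρ ^ (p + q + 2*k - 1) := by
          have h1 : |y| ^ (p + q + 2*k - 1) ≤ ρ ^ (p + q + 2*k - 1) :=
            pow_le_pow_left₀ (abs_nonneg y) hyρ _
          have h3 := mul_le_mul_of_nonneg_left h1
            (by positivity : (0:ℝ) ≤ Acoef n p q k * ((p + q + 2*k : ℕ) : ℝ) ^ (j+1))
          have h4 := mul_le_mul_of_nonneg_right hAB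
            (pow_nonneg hρ0.le (p + q + 2*k - 1))
          calc Acoef n p q k * ((p + q + 2*k : ℕ) : ℝ) ^ (j+1) * |y| ^ (p + q + 2*k - 1)
              ≤ Acoef n p q k * ((p + q + 2*k : ℕ) : ℝ) ^ (j+1) * ρ ^ (p + q + 2*k - 1) := h3
            _ ≤ B * ρ ^ (p + q + 2*k - 1) := h4
  · apply summable_zero.congr
    intro k
    have : (0:ℝ) ^ (p + q + 2*k) = 0 := zero_pow (by omega)
    simp [this]

include hn hp hq hB in
lemma opN_iterate (j : ℕ) (hj : j ≤ n + 1) :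
    ∀ r ∈ Set.Ioo (-1:ℝ) 1,
    opN^[j] (fun x : ℝ => ∑' k, Acoef n p q k * x ^ (p + q + 2*k)) r
      = ∑' k, Acoef n p q k * ((p + q + 2*k : ℕ) : ℝ) ^ j * r ^ (p + q + 2*k) := by
  induction j with
  | zero =>
      intro r _
      simp only [Function.iterate_zero, id_eq]
      exact tsum_congr fun k => by rw [pow_zero, mul_one]
  | succ j ih =>
      intro r hr
      rw [Function.iterate_succ_apply']
      have hev : (opN^[j] (fun x : ℝ => ∑' k, Acoef n p q k * x ^ (p + q + 2*k)))
          =ᶠ[nhds r] (fun x => ∑' k, Acoef n p q k * ((p + q + 2*k : ℕ) : ℝ) ^ j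
            * x ^ (p + q + 2*k)) := by
        filter_upwards [isOpen_Ioo.mem_nhds hr] with y hy
        exact ih (by omega) y hy
      rw [opN, hev.deriv_eq, (hasDerivAt_F n p q hn hp hq B hB j (by omega) r hr).deriv,
        ← _root_.tsum_mul_left]
      apply tsum_congr
      intro k
      have hw : p + q + 2*k = (p + q + 2*k - 1) + 1 := by omega
      calc r * (Acoef n p q k * ((p + q + 2*k : ℕ) : ℝ) ^ j *
            (((p + q + 2*k : ℕ) : ℝ) * r ^ (p + q + 2*k - 1)))
          = Acoef n p q k * ((p + q + 2*k : ℕ) : ℝ) ^ (j+1) *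
            (r ^ (p + q + 2*k - 1) * r) := by rw [pow_succ]; ring
        _ = _ := by rw [← pow_succ, ← hw]

end deriv_part
/-- `(1-r)·(r d/dr)^{n+1}[r^{p+q} ₂F₁(p,q;p+q+n;r²)] → 2ⁿ Γ(p+q+n)/(Γ(p)Γ(q))` as `r → 1⁻`. -/
theorem statement19 (n p q : ℕ) (hn : 1 ≤ n) (hp : 1 ≤ p) (hq : 1 ≤ q) :
    Filter.Tendsto
      (fun r : ℝ => (1 - r) *
        opN^[n + 1] (fun r => r ^ (p + q) * hyp2F1 p q ((p : ℝ) + q + n) (r ^ 2)) r)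
      (nhdsWithin 1 (Set.Iio 1))
      (nhds (2 ^ n * Real.Gamma ((p : ℝ) + q + n) / (Real.Gamma p * Real.Gamma q))) := by
  set C0 : ℝ := ((p+q+n-1).factorial : ℝ) / (((p-1).factorial : ℝ) * ((q-1).factorial : ℝ))
    with hC0
  -- rewrite the inner function as a power series
  have hfun : (fun r : ℝ => r ^ (p + q) * hyp2F1 p q ((p : ℝ) + q + n) (r ^ 2))
      = fun x : ℝ => ∑' k, Acoef n p q k * x ^ (p + q + 2*k) := by
    funext x
    rw [hyp2F1, ← _root_.tsum_mul_left]
    apply tsum_congr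
    intro k
    rw [Acoef, pow_add x (p+q) (2*k), pow_mul, pow_add x p q]
    ring
  rw [hfun]
  -- the coefficient limit and bound
  have htd := Acoef_tendsto n p q hn hp hq
  obtain ⟨B, hB⟩ : ∃ B : ℝ, ∀ k, Acoef n p q k * ((p + q + 2*k : ℕ) : ℝ) ^ (n+1) ≤ B := by
    obtain ⟨B, hB⟩ := htd.bddAbove_range
    exact ⟨B, fun k => hB ⟨k, rfl⟩⟩
  -- Abel limit for b k := Acoef * w^(n+1)
  have habel := abel_limit _ _ htd
  -- G x := (1-x) * ∑' b k x^k
  set G : ℝ → ℝ := fun x => (1 - x) *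
    ∑' k, (Acoef n p q k * ((p + q + 2*k : ℕ) : ℝ) ^ (n+1)) * x ^ k with hG
  -- square map tendsto
  have hIoo : Set.Ioo (0:ℝ) 1 ∈ nhdsWithin (1:ℝ) (Set.Iio 1) :=
    Ioo_mem_nhdsLT zero_lt_one
  have hsq : Tendsto (fun r : ℝ => r ^ 2) (nhdsWithin 1 (Set.Iio 1))
      (nhdsWithin 1 (Set.Iio 1)) := by
    rw [tendsto_nhdsWithin_iff]
    constructor
    · have h1 : Tendsto (fun r : ℝ => r ^ 2) (nhds 1) (nhds 1) := by
        have := (continuous_pow 2).tendsto (1:ℝ)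
        simpa using this
      exact h1.mono_left nhdsWithin_le_nhds
    · filter_upwards [hIoo] with r hr
      have : r^2 < 1 := by nlinarith [hr.1, hr.2]
      exact this
  have hG2 : Tendsto (fun r : ℝ => G (r^2)) (nhdsWithin 1 (Set.Iio 1))
      (𝓝 (2^(n+1) * C0)) := habel.comp hsq
  have hrat : Tendsto (fun r : ℝ => r ^ (p+q) / (1 + r)) (nhdsWithin 1 (Set.Iio 1))
      (𝓝 (1/2)) := by
    have h1 : Tendsto (fun r : ℝ => r ^ (p+q) / (1 + r)) (nhds 1) (𝓝 ((1:ℝ)^(p+q)/(1+1))) :=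
      Tendsto.div ((continuous_pow (p+q)).tendsto 1)
        ((continuous_add_left (1:ℝ)).tendsto 1) (by norm_num)
    have h2 : ((1:ℝ)^(p+q)/(1+1)) = 1/2 := by norm_num
    rw [h2] at h1
    exact h1.mono_left nhdsWithin_le_nhds
  have hprod := hrat.mul hG2
  have hconst : (1/2 : ℝ) * (2^(n+1) * C0)
      = 2 ^ n * Real.Gamma ((p : ℝ) + q + n) / (Real.Gamma p * Real.Gamma q) := by
    have hgp : Real.Gamma ((p:ℝ)) = ((p-1).factorial : ℝ) := by
      rw [show ((p:ℝ)) = (((p-1:ℕ)):ℝ) + 1 by push_cast [Nat.cast_sub hp]; ring]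
      exact Real.Gamma_nat_eq_factorial _
    have hgq : Real.Gamma ((q:ℝ)) = ((q-1).factorial : ℝ) := by
      rw [show ((q:ℝ)) = (((q-1:ℕ)):ℝ) + 1 by push_cast [Nat.cast_sub hq]; ring]
      exact Real.Gamma_nat_eq_factorial _
    have hgc : Real.Gamma ((p:ℝ) + q + n) = ((p+q+n-1).factorial : ℝ) := by
      rw [show ((p:ℝ) + q + n) = (((p+q+n-1:ℕ)):ℝ) + 1 by
        push_cast [Nat.cast_sub (by omega : 1 ≤ p+q+n)]; ring]
      exact Real.Gamma_nat_eq_factorial _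
    rw [hgp, hgq, hgc, hC0]
    ring
  rw [← hconst]
  apply hprod.congr'
  filter_upwards [hIoo] with r hr
  have hr' : r ∈ Set.Ioo (-1:ℝ) 1 := ⟨by linarith [hr.1], hr.2⟩
  rw [opN_iterate n p q hn hp hq B hB (n+1) le_rfl r hr']
  set T : ℝ := ∑' k, Acoef n p q k * ((p + q + 2*k : ℕ) : ℝ) ^ (n+1) * (r^2) ^ k with hT
  have hsum_eq : (∑' k, Acoef n p q k * ((p + q + 2*k : ℕ) : ℝ) ^ (n+1) * r ^ (p + q + 2*k))
      = r ^ (p+q) * T := by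
    rw [hT, ← _root_.tsum_mul_left]
    apply tsum_congr
    intro k
    rw [pow_add r (p+q) (2*k), pow_mul]
    ring
  have hGr : G (r^2) = (1 - r^2) * T := rfl
  rw [hGr, hsum_eq]
  have h1r : (1:ℝ) + r ≠ 0 := by linarith [hr.1]
  have h2 : (1:ℝ) - r^2 = (1-r)*(1+r) := by ring
  rw [h2]
  field_simp
end
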